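/- Assume X_I has full column rank (λ_min > 0), erc(X,I) < 1, and 0 ≤ ε₂ < min(ε^a, ε^b), where ε^a = β_min λ_min(1 − erc(X,I))/2 and ε^b = λ_min β_min/(1 + 2λ_max/λ_min + (λ_max/λ_min)(β_max/β_min)). Run OMP on y. Then the first k₀ selected indices are exactly the elements of I, and t(k) > t(k₀) for every 1 ≤ k ≤ k₀ − 1. -/

import Mathlib

open scoped BigOperators Classical
open MeasureTheory Filter

noncomputable section

namespace TFOMP

variable {n p : ℕ}

/-- The `j`-th column of `X`, as a vector in Euclidean space `ℝ^n`. -/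
def col (X : Matrix (Fin n) (Fin p) ℝ) (j : Fin p) : EuclideanSpace ℝ (Fin n) :=
  WithLp.toLp 2 (fun i => X i j)

/-- Column span of the submatrix `X_J`. -/
def colSpan (X : Matrix (Fin n) (Fin p) ℝ) (J : Finset (Fin p)) :
    Submodule ℝ (EuclideanSpace ℝ (Fin n)) :=
  Submodule.span ℝ (col X '' (J : Set (Fin p)))

/-- Orthogonal projection `P_J y` onto the column span of `X_J` (`P_∅ = 0`). -/
def proj (X : Matrix (Fin n) (Fin p) ℝ) (J : Finset (Fin p))
    (y : EuclideanSpace ℝ (Fin n)) : EuclideanSpace ℝ (Fin n) :=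
  (Submodule.orthogonalProjection (colSpan X J) y : EuclideanSpace ℝ (Fin n))

/-- Residual `(I_n − P_J) y`. -/
def resid (X : Matrix (Fin n) (Fin p) ℝ) (J : Finset (Fin p))
    (y : EuclideanSpace ℝ (Fin n)) : EuclideanSpace ℝ (Fin n) :=
  y - proj X J y


/-- The product `Xβ ∈ ℝ^n`, as a vector in Euclidean space. -/
def mulVecE (X : Matrix (Fin n) (Fin p) ℝ) (β : Fin p → ℝ) : EuclideanSpace ℝ (Fin n) :=
  WithLp.toLp 2 (fun i => ∑ j, X i j * β j)

/-- `X_J` has full column rank: the columns of `X` indexed by `J` are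
linearly independent. -/
def FullColRank (X : Matrix (Fin n) (Fin p) ℝ) (J : Finset (Fin p)) : Prop :=
  LinearIndependent ℝ (fun j : J => col X j)

/-- The Gram matrix `X_Iᵀ X_I`. -/
def gram (X : Matrix (Fin n) (Fin p) ℝ) (I : Finset (Fin p)) : Matrix I I ℝ :=
  fun a b => ∑ i, X i (a : Fin p) * X i (b : Fin p)

/-- `l` is the smallest (real) eigenvalue of `G`. -/
def IsSmallestEig {m : Type*} [Fintype m] (G : Matrix m m ℝ) (l : ℝ) : Prop :=
  (∃ v : m → ℝ, v ≠ 0 ∧ G.mulVec v = l • v) ∧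
    ∀ μ : ℝ, (∃ v : m → ℝ, v ≠ 0 ∧ G.mulVec v = μ • v) → l ≤ μ

/-- `l` is the largest (real) eigenvalue of `G`. -/
def IsLargestEig {m : Type*} [Fintype m] (G : Matrix m m ℝ) (l : ℝ) : Prop :=
  (∃ v : m → ℝ, v ≠ 0 ∧ G.mulVec v = l • v) ∧
    ∀ μ : ℝ, (∃ v : m → ℝ, v ≠ 0 ∧ G.mulVec v = μ • v) → μ ≤ l

/-- `X_I† X_j = (X_IᵀX_I)⁻¹ X_Iᵀ X_j`, the coefficient vector of column `j`
against the columns indexed by `I`. -/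
def pseudoCoeff (X : Matrix (Fin n) (Fin p) ℝ) (I : Finset (Fin p)) (j : Fin p) :
    I → ℝ :=
  (gram X I)⁻¹.mulVec fun a => ∑ i, X i (a : Fin p) * X i j

/-- Exact recovery coefficient `erc(X, I) = max_{j ∉ I} ‖X_I† X_j‖₁`
(as a supremum; by convention `0` when `Iᶜ = ∅`). -/
def erc (X : Matrix (Fin n) (Fin p) ℝ) (I : Finset (Fin p)) : ℝ :=
  sSup ((fun j => ∑ a : I, |pseudoCoeff X I j a|) '' {j | j ∉ I})

/-- Mutual coherence `μ_X = max_{i ≠ j} |X_iᵀ X_j|` (as a supremum). -/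
def mutualCoherence (X : Matrix (Fin n) (Fin p) ℝ) : ℝ :=
  sSup {r | ∃ i j : Fin p, i ≠ j ∧ r = |∑ k, X k i * X k j|}

/-- `δ` is a restricted isometry constant of order `k` for `X`:
`(1−δ)‖b‖₂² ≤ ‖Xb‖₂² ≤ (1+δ)‖b‖₂²` for all `k`-sparse `b`. -/
def IsRIC (X : Matrix (Fin n) (Fin p) ℝ) (k : ℕ) (δ : ℝ) : Prop :=
  0 ≤ δ ∧ ∀ b : Fin p → ℝ, ({j | b j ≠ 0}.toFinset.card ≤ k) →
    (1 - δ) * ‖(b : Fin p → ℝ)‖ ^ 2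
        ≤ ‖(X.mulVec b : Fin n → ℝ)‖ ^ 2 ∧
      ‖(X.mulVec b : Fin n → ℝ)‖ ^ 2
        ≤ (1 + δ) * ‖(b : Fin p → ℝ)‖ ^ 2

/-- `β_min = min_{k ∈ I} |β_k|` (as an infimum). -/
def betaMin (β : Fin p → ℝ) (I : Finset (Fin p)) : ℝ :=
  sInf ((fun k => |β k|) '' (I : Set (Fin p)))

/-- `β_max = max_{k ∈ I} |β_k|` (as a supremum). -/
def betaMax (β : Fin p → ℝ) (I : Finset (Fin p)) : ℝ :=
  sSup ((fun k => |β k|) '' (I : Set (Fin p)))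

/-- The restriction `β_u` of `β` to the index set `u` (zero outside `u`),
viewed in `ℓ₂`. -/
def restrictVec (β : Fin p → ℝ) (u : Finset (Fin p)) : EuclideanSpace ℝ (Fin p) :=
  WithLp.toLp 2 (fun k => if k ∈ u then β k else 0)

/-- The support set `J^k = {t_1, …, t_k}` of OMP after `k` iterations (here `t`
is `0`-indexed: `t 0, t 1, …` are the successively selected indices, so the
paper's `t_i` is `t (i-1)`). -/
def ompSupp (t : ℕ → Fin p) (k : ℕ) : Finset (Fin p) :=
  (Finset.range k).image t

/-- The OMP residual `r^k = (I_n − P_{J^k}) y`. -/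
def ompResid (X : Matrix (Fin n) (Fin p) ℝ) (y : EuclideanSpace ℝ (Fin n))
    (t : ℕ → Fin p) (k : ℕ) : EuclideanSpace ℝ (Fin n) :=
  resid X (ompSupp t k) y

/-- `t` is the sequence of indices selected by OMP (with least-index
tie-breaking) run on data `(X, y)`: at each step, the next index `t k` is the
smallest index maximizing the absolute correlation `|X_jᵀ r^k|` with the
current residual `r^k`. -/
def IsOMP (X : Matrix (Fin n) (Fin p) ℝ) (y : EuclideanSpace ℝ (Fin n))
    (t : ℕ → Fin p) : Prop :=
  ∀ k : ℕ, IsLeast {j : Fin p | ∀ j' : Fin p,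
    |(inner ℝ (col X j') (ompResid X y t k) : ℝ)| ≤
      |(inner ℝ (col X j) (ompResid X y t k) : ℝ)|} (t k)

/-- The ratio statistic `t(k) = ‖r^k‖₂ / ‖r^{k−1}‖₂` (used for `k ≥ 1`). -/
def ratio (X : Matrix (Fin n) (Fin p) ℝ) (y : EuclideanSpace ℝ (Fin n))
    (t : ℕ → Fin p) (k : ℕ) : ℝ :=
  ‖ompResid X y t k‖ / ‖ompResid X y t (k - 1)‖

end TFOMP

open TFOMP

namespace TFAux

open TFOMP Finset

variable {n p : ℕ} (X : Matrix (Fin n) (Fin p) ℝ)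

local notation "E" => EuclideanSpace ℝ (Fin n)

lemma inner_col (j : Fin p) (z : E) :
    (inner ℝ (col X j) z : ℝ) = ∑ i, X i j * z i := by
  simp [PiLp.inner_apply, col, RCLike.inner_apply, mul_comm]

lemma sum_smul_col_mem (J : Finset (Fin p)) (u : Fin p → ℝ) :
    (∑ a ∈ J, u a • col X a) ∈ colSpan X J := by
  refine Submodule.sum_mem _ fun a ha => Submodule.smul_mem _ _ ?_
  exact Submodule.subset_span ⟨a, by simpa using ha, rfl⟩

lemma exists_rep_of_mem_colSpan {J : Finset (Fin p)} {z : E}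
    (hz : z ∈ colSpan X J) : ∃ u : Fin p → ℝ, z = ∑ a ∈ J, u a • col X a := by
  induction hz using Submodule.span_induction with
  | mem x hx =>
    obtain ⟨a, ha, rfl⟩ := hx
    refine ⟨fun b => if b = a then 1 else 0, ?_⟩
    rw [Finset.sum_eq_single a]
    · simp
    · intro b hb hba; simp [hba]
    · intro h; exact absurd (by simpa using ha) h
  | zero => exact ⟨0, by simp⟩
  | add x y hx hy ihx ihy =>
    obtain ⟨u, rfl⟩ := ihx; obtain ⟨v, rfl⟩ := ihy
    exact ⟨u + v, by simp [add_smul, Finset.sum_add_distrib]⟩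
  | smul c x hx ihx =>
    obtain ⟨u, rfl⟩ := ihx
    exact ⟨c • u, by simp [Finset.smul_sum, smul_smul]⟩

lemma inner_resid_zero (J : Finset (Fin p)) (y : E) {z : E}
    (hz : z ∈ colSpan X J) : (inner ℝ z (resid X J y) : ℝ) = 0 := by
  have h := Submodule.sub_starProjection_mem_orthogonal (K := colSpan X J) y
  exact (Submodule.mem_orthogonal _ _).1 h z hz

lemma resid_add (J : Finset (Fin p)) (a b : E) :
    resid X J (a + b) = resid X J a + resid X J b := by
  simp only [resid, proj, map_add]
  push_cast
  abel

lemma norm_resid_le_sub (J : Finset (Fin p)) (y : E) {z : E}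
    (hz : z ∈ colSpan X J) : ‖resid X J y‖ ≤ ‖y - z‖ := by
  rw [resid, proj, ← Submodule.starProjection_apply, Submodule.starProjection_minimal]
  exact ciInf_le ⟨0, fun x hx => by obtain ⟨v, rfl⟩ := hx; positivity⟩ (⟨z, hz⟩ : colSpan X J)

lemma norm_resid_le (J : Finset (Fin p)) (y : E) : ‖resid X J y‖ ≤ ‖y‖ := by
  simpa using norm_resid_le_sub X J y (Submodule.zero_mem _)

lemma resid_eq_zero_of_mem (J : Finset (Fin p)) {y : E}
    (hy : y ∈ colSpan X J) : resid X J y = 0 := by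
  rw [resid, proj, ← Submodule.starProjection_apply, Submodule.starProjection_eq_self_iff.2 hy, sub_self]

end TFAux

namespace TFAux

open TFOMP Finset

lemma rayleigh {m : Type*} [Fintype m] [DecidableEq m] {G : Matrix m m ℝ}
    (hG : G.IsHermitian) {l L : ℝ} (hl : IsSmallestEig G l) (hL : IsLargestEig G L)
    (u : EuclideanSpace ℝ m) :
    l * ‖u‖ ^ 2 ≤ (inner ℝ u (WithLp.toLp 2 (G.mulVec u) : EuclideanSpace ℝ m) : ℝ) ∧
      (inner ℝ u (WithLp.toLp 2 (G.mulVec u) : EuclideanSpace ℝ m) : ℝ) ≤ L * ‖u‖ ^ 2 := by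
  classical
  set b := hG.eigenvectorBasis with hb
  set lam := hG.eigenvalues with hlam
  have hev : ∀ i, G.mulVec (b i) = lam i • ⇑(b i) := fun i => hG.mulVec_eigenvectorBasis i
  have hbne : ∀ i, (⇑(b i) : m → ℝ) ≠ 0 := by
    intro i h
    have := b.orthonormal.1 i
    rw [show (b i : EuclideanSpace ℝ m) = 0 from by ext j; simpa using congrFun h j] at this
    simp at this
  have hbound : ∀ i, l ≤ lam i ∧ lam i ≤ L := fun i =>
    ⟨hl.2 _ ⟨b i, hbne i, hev i⟩, hL.2 _ ⟨b i, hbne i, hev i⟩⟩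
  set c : m → ℝ := fun i => (inner ℝ (b i) u : ℝ) with hc
  have hrep : (∑ i, c i • (b i : EuclideanSpace ℝ m)) = u := b.sum_repr' u
  have hGu : (WithLp.toLp 2 (G.mulVec u) : EuclideanSpace ℝ m) = ∑ i, (c i * lam i) • (b i : EuclideanSpace ℝ m) := by
    have hu' : (u : m → ℝ) = ∑ i, c i • ((b i : EuclideanSpace ℝ m) : m → ℝ) := by
      conv_lhs => rw [← hrep]
      simp
    have : G.mulVec u = ∑ i, (c i * lam i) • ((b i : EuclideanSpace ℝ m) : m → ℝ) := by
      rw [hu', Matrix.mulVec_sum]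
      refine Finset.sum_congr rfl fun i _ => ?_
      rw [Matrix.mulVec_smul, hev i, smul_smul]
    rw [this]
    simp
  have hinner_bi : ∀ i, (inner ℝ u (b i : EuclideanSpace ℝ m) : ℝ) = c i := fun i =>
    real_inner_comm _ _
  have hQ : (inner ℝ u (WithLp.toLp 2 (G.mulVec u) : EuclideanSpace ℝ m) : ℝ) = ∑ i, lam i * c i ^ 2 := by
    rw [hGu, inner_sum]
    refine Finset.sum_congr rfl fun i _ => ?_
    rw [real_inner_smul_right, hinner_bi]
    ring
  have hN : ‖u‖ ^ 2 = ∑ i, c i ^ 2 := by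
    have : (inner ℝ u u : ℝ) = ∑ i, c i ^ 2 := by
      nth_rw 2 [← hrep]
      rw [inner_sum]
      refine Finset.sum_congr rfl fun i _ => ?_
      rw [real_inner_smul_right, hinner_bi]
      ring
    rw [← real_inner_self_eq_norm_sq, this]
  constructor
  · rw [hQ, hN, Finset.mul_sum]
    exact Finset.sum_le_sum fun i _ =>
      mul_le_mul_of_nonneg_right (hbound i).1 (sq_nonneg _)
  · rw [hQ, hN, Finset.mul_sum]
    exact Finset.sum_le_sum fun i _ =>
      mul_le_mul_of_nonneg_right (hbound i).2 (sq_nonneg _)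

variable {n p : ℕ} (X : Matrix (Fin n) (Fin p) ℝ)

lemma gram_isHermitian (I : Finset (Fin p)) : (gram X I).IsHermitian := by
  ext a b
  simp [gram, Matrix.conjTranspose_apply, mul_comm]

end TFAux

namespace TFAux

open TFOMP Finset

variable {n p : ℕ} (X : Matrix (Fin n) (Fin p) ℝ) (I : Finset (Fin p))

local notation "E" => EuclideanSpace ℝ (Fin n)

/-- restriction of coefficients to the subtype, as Euclidean vector -/
def restr (u : Fin p → ℝ) : EuclideanSpace ℝ ↥I := WithLp.toLp 2 (fun a => u ↑a)

lemma inner_col_col (a b : Fin p) :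
    (inner ℝ (col X a) (col X b) : ℝ) = ∑ i, X i a * X i b := by
  simp [PiLp.inner_apply, col, RCLike.inner_apply, mul_comm]

lemma mulVec_restr_eq_inner (u : Fin p → ℝ) {b : Fin p} (hb : b ∈ I) :
    (gram X I).mulVec (restr I u) ⟨b, hb⟩
      = (inner ℝ (col X b) (∑ a ∈ I, u a • col X a) : ℝ) := by
  rw [inner_sum]
  simp only [real_inner_smul_right, inner_col_col]
  rw [Matrix.mulVec, dotProduct]
  rw [← Finset.sum_coe_sort I (fun a => u a * ∑ i, X i b * X i a)]
  refine Finset.sum_congr rfl fun a _ => ?_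
  simp [gram, restr, mul_comm]

lemma norm_sq_sum_eq (u : Fin p → ℝ) :
    ‖∑ a ∈ I, u a • col X a‖ ^ 2
      = (inner ℝ (restr I u) (WithLp.toLp 2 ((gram X I).mulVec (restr I u)) : EuclideanSpace ℝ ↥I) : ℝ) := by
  rw [← real_inner_self_eq_norm_sq]
  rw [sum_inner]
  simp only [real_inner_smul_left]
  rw [PiLp.inner_apply]
  simp only [RCLike.inner_apply, conj_trivial]
  rw [Finset.univ_eq_attach, ← Finset.sum_attach I
    (fun a => u a * (inner ℝ (col X a) (∑ b ∈ I, u b • col X b) : ℝ))]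
  refine Finset.sum_congr rfl fun a _ => ?_
  rw [mulVec_restr_eq_inner X I u a.2]
  exact mul_comm _ _

lemma norm_sq_restr (u : Fin p → ℝ) :
    ‖(restr I u : EuclideanSpace ℝ ↥I)‖ ^ 2 = ∑ a ∈ I, u a ^ 2 := by
  rw [← real_inner_self_eq_norm_sq, PiLp.inner_apply]
  simp only [RCLike.inner_apply, conj_trivial]
  rw [Finset.univ_eq_attach, ← Finset.sum_attach I (fun a => u a ^ 2)]
  exact Finset.sum_congr rfl fun a _ => by simp [restr, sq]

lemma norm_sq_sum_ge {l L : ℝ} (hl : IsSmallestEig (gram X I) l)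
    (hL : IsLargestEig (gram X I) L) (u : Fin p → ℝ) :
    l * ∑ a ∈ I, u a ^ 2 ≤ ‖∑ a ∈ I, u a • col X a‖ ^ 2 := by
  rw [norm_sq_sum_eq, ← norm_sq_restr I u]
  exact (rayleigh (gram_isHermitian X I) hl hL (restr I u)).1

lemma norm_sq_sum_le {l L : ℝ} (hl : IsSmallestEig (gram X I) l)
    (hL : IsLargestEig (gram X I) L) (u : Fin p → ℝ) :
    ‖∑ a ∈ I, u a • col X a‖ ^ 2 ≤ L * ∑ a ∈ I, u a ^ 2 := by
  rw [norm_sq_sum_eq, ← norm_sq_restr I u]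
  exact (rayleigh (gram_isHermitian X I) hl hL (restr I u)).2

lemma gram_det_ne_zero {l L : ℝ} (hl : IsSmallestEig (gram X I) l)
    (hL : IsLargestEig (gram X I) L) (hpos : 0 < l) :
    (gram X I).det ≠ 0 := by
  intro hdet
  obtain ⟨v, hv, hGv⟩ := (Matrix.exists_mulVec_eq_zero_iff).2 hdet
  set V : EuclideanSpace ℝ ↥I := WithLp.toLp 2 v with hV
  have h1 := (rayleigh (gram_isHermitian X I) hl hL V).1
  have hGV : WithLp.toLp 2 ((gram X I).mulVec V) = (0 : EuclideanSpace ℝ ↥I) := by simp [hV, hGv]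
  rw [hGV] at h1
  have h2 : (inner ℝ V (0 : EuclideanSpace ℝ ↥I) : ℝ) = 0 := inner_zero_right _
  rw [h2] at h1
  have hvne : V ≠ 0 := fun h => hv (by simpa [hV] using congrArg WithLp.ofLp h)
  have h0 : 0 < ‖V‖ := by rwa [norm_pos_iff]
  have hvn : (0:ℝ) < ‖V‖ ^ 2 := pow_pos h0 2
  nlinarith

lemma erc_nonneg : 0 ≤ erc X I := by
  by_cases hne : ({j : Fin p | j ∉ I}).Nonempty
  · obtain ⟨j, hj⟩ := hne
    have hmem : (∑ a : ↥I, |pseudoCoeff X I j a|)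
        ∈ ((fun j => ∑ a : ↥I, |pseudoCoeff X I j a|) '' {j | j ∉ I}) := ⟨j, hj, rfl⟩
    refine le_trans ?_ (le_csSup ((Set.toFinite _).image _).bddAbove hmem)
    exact Finset.sum_nonneg fun a _ => abs_nonneg _
  · rw [erc, Set.not_nonempty_iff_eq_empty.1 hne]
    simp [Real.sSup_empty]

lemma inner_notin_le {l L : ℝ} (hl : IsSmallestEig (gram X I) l)
    (hL : IsLargestEig (gram X I) L) (hpos : 0 < l)
    {j : Fin p} (hj : j ∉ I) (u : Fin p → ℝ) {M : ℝ} (hM0 : 0 ≤ M)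
    (hM : ∀ b : ↥I, |(gram X I).mulVec (restr I u) b| ≤ M) :
    |(inner ℝ (col X j) (∑ a ∈ I, u a • col X a) : ℝ)| ≤ erc X I * M := by
  classical
  set G := gram X I with hG
  have hdet := gram_det_ne_zero X I hl hL hpos
  set mI : ↥I → ℝ := fun a => ∑ i, X i (a : Fin p) * X i j with hmI
  have hGsymm : G.transpose = G := by
    ext a b; simp [hG, gram, Matrix.transpose_apply, mul_comm]
  -- step 1 : inner = mI ⬝ᵥ restr u
  have step1 : (inner ℝ (col X j) (∑ a ∈ I, u a • col X a) : ℝ)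
      = dotProduct mI (restr I u) := by
    rw [inner_sum]
    simp only [real_inner_smul_right, inner_col_col]
    rw [dotProduct, Finset.univ_eq_attach,
      ← Finset.sum_attach I (fun a => u a * ∑ i, X i j * X i a)]
    refine Finset.sum_congr rfl fun a _ => ?_
    simp [hmI, restr, mul_comm]
  -- step 2
  have step2 : dotProduct mI (restr I u)
      = dotProduct (pseudoCoeff X I j) (G.mulVec (restr I u)) := by
    have hc : pseudoCoeff X I j = G⁻¹.mulVec mI := rfl
    rw [hc, Matrix.dotProduct_mulVec, ← Matrix.mulVec_transpose, hGsymm,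
      Matrix.mulVec_mulVec, Matrix.mul_nonsing_inv _ (isUnit_iff_ne_zero.2 hdet),
      Matrix.one_mulVec]
  rw [step1, step2]
  have habs : |dotProduct (pseudoCoeff X I j) (G.mulVec (restr I u))|
      ≤ (∑ a : ↥I, |pseudoCoeff X I j a|) * M := by
    rw [dotProduct, Finset.sum_mul]
    refine le_trans (Finset.abs_sum_le_sum_abs _ _) (Finset.sum_le_sum fun a _ => ?_)
    rw [abs_mul]
    exact mul_le_mul_of_nonneg_left (hM a) (abs_nonneg _)
  refine le_trans habs (mul_le_mul_of_nonneg_right ?_ hM0)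
  exact le_csSup ((Set.toFinite _).image _).bddAbove ⟨j, hj, rfl⟩

end TFAux

namespace TFAux

open TFOMP Finset

variable {n p : ℕ} (X : Matrix (Fin n) (Fin p) ℝ) (I : Finset (Fin p))

local notation "E" => EuclideanSpace ℝ (Fin n)

lemma betaMin_le {β : Fin p → ℝ} {a : Fin p} (ha : a ∈ I) : betaMin β I ≤ |β a| :=
  csInf_le (((I : Set (Fin p)).toFinite.image _).bddBelow) ⟨a, ha, rfl⟩

lemma le_betaMax {β : Fin p → ℝ} {a : Fin p} (ha : a ∈ I) : |β a| ≤ betaMax β I :=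
  le_csSup (((I : Set (Fin p)).toFinite.image _).bddAbove) ⟨a, ha, rfl⟩

lemma betaMin_pos {β : Fin p → ℝ} (hne : I.Nonempty)
    (hsupp : ∀ k, k ∈ I ↔ β k ≠ 0) : 0 < betaMin β I := by
  obtain ⟨a0, ha0⟩ := hne
  have hfin : ((fun k => |β k|) '' (I : Set (Fin p))).Finite :=
    (I : Set (Fin p)).toFinite.image _
  have hnemem : ((fun k => |β k|) '' (I : Set (Fin p))).Nonempty := ⟨|β a0|, a0, ha0, rfl⟩
  obtain ⟨a, ha, heq⟩ := hnemem.csInf_mem hfin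
  rw [betaMin, ← heq]
  exact abs_pos.2 ((hsupp a).1 ha)

lemma betaMin_le_betaMax {β : Fin p → ℝ} (hne : I.Nonempty) :
    betaMin β I ≤ betaMax β I := by
  obtain ⟨a0, ha0⟩ := hne
  exact le_trans (betaMin_le I ha0) (le_betaMax I ha0)

lemma eig_le_one_le {l L : ℝ} (hl : IsSmallestEig (gram X I) l)
    (hL : IsLargestEig (gram X I) L) (hcols : ∀ j, ‖col X j‖ = 1)
    {a : Fin p} (ha : a ∈ I) : l ≤ 1 ∧ 1 ≤ L := by
  classical
  set u : Fin p → ℝ := fun b => if b = a then 1 else 0 with hu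
  have hsum : ∑ b ∈ I, u b ^ 2 = 1 := by
    rw [Finset.sum_eq_single a]
    · simp [hu]
    · intro b _ hba; simp [hu, hba]
    · intro h; exact absurd ha h
  have hvec : (∑ b ∈ I, u b • col X b) = col X a := by
    rw [Finset.sum_eq_single a]
    · simp [hu]
    · intro b _ hba; simp [hu, hba]
    · intro h; exact absurd ha h
  have h1 := norm_sq_sum_ge X I hl hL u
  have h2 := norm_sq_sum_le X I hl hL u
  rw [hsum, hvec, hcols a] at h1 h2
  constructor <;> nlinarith

lemma mulVecE_eq_sum {β : Fin p → ℝ} (hsupp : ∀ k, k ∈ I ↔ β k ≠ 0) :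
    mulVecE X β = ∑ a ∈ I, β a • col X a := by
  ext i
  have h1 : (∑ a ∈ I, β a • col X a) i = ∑ a ∈ I, β a * X i a := by
    rw [WithLp.ofLp_sum, Finset.sum_apply]
    rfl
  rw [h1]
  show (∑ j, X i j * β j) = _
  rw [← Finset.sum_subset (Finset.subset_univ I) (fun x _ hx => by
    have : β x = 0 := by_contra fun hne => hx ((hsupp x).2 hne)
    simp [this])]
  exact Finset.sum_congr rfl fun a _ => mul_comm _ _

lemma resid_decomp {β : Fin p → ℝ} {J : Finset (Fin p)} (hJI : J ⊆ I)
    (hsupp : ∀ k, k ∈ I ↔ β k ≠ 0) :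
    ∃ u : Fin p → ℝ, (∀ a, a ∈ I → a ∉ J → u a = β a) ∧
      resid X J (mulVecE X β) = ∑ a ∈ I, u a • col X a := by
  classical
  have hmem : proj X J (mulVecE X β) ∈ colSpan X J := by
    rw [proj]; exact SetLike.coe_mem _
  obtain ⟨v, hv⟩ := exists_rep_of_mem_colSpan X hmem
  refine ⟨fun a => β a - if a ∈ J then v a else 0, fun a _ haJ => by simp [haJ], ?_⟩
  have hv' : proj X J (∑ a ∈ I, β a • col X a) = ∑ a ∈ J, v a • col X a := by
    rw [← mulVecE_eq_sum X I hsupp]; exact hv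
  rw [resid, mulVecE_eq_sum X I hsupp, hv']
  have hJsum : (∑ a ∈ J, v a • col X a)
      = ∑ a ∈ I, (if a ∈ J then v a else 0) • col X a := by
    rw [← Finset.sum_subset hJI (fun x _ hx => by
      rw [if_neg hx, zero_smul])]
    exact Finset.sum_congr rfl fun a ha => by rw [if_pos ha]
  rw [hJsum, ← Finset.sum_sub_distrib]
  exact Finset.sum_congr rfl fun a _ => by rw [sub_smul]

end TFAux

namespace TFAux

open TFOMP Finset

variable {n p : ℕ}

set_option maxHeartbeats 1000000 in
lemma omp_step (X : Matrix (Fin n) (Fin p) ℝ) (β : Fin p → ℝ)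
    (w : EuclideanSpace ℝ (Fin n)) (I : Finset (Fin p)) (ε₂ l L : ℝ)
    (hcols : ∀ j, ‖col X j‖ = 1)
    (hsupp : ∀ k, k ∈ I ↔ β k ≠ 0)
    (hw : ‖w‖ ≤ ε₂)
    (hl : IsSmallestEig (gram X I) l) (hLe : IsLargestEig (gram X I) L)
    (hlpos : 0 < l) (herc : erc X I < 1)
    (hea : ε₂ < betaMin β I * l * (1 - erc X I) / 2)
    {J : Finset (Fin p)} (hJI : J ⊆ I) (hJne : (I \ J).Nonempty)
    {r : EuclideanSpace ℝ (Fin n)} (hr : r = resid X J (mulVecE X β + w))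
    {tk : Fin p}
    (htk : ∀ j', |(inner ℝ (col X j') r : ℝ)| ≤ |(inner ℝ (col X tk) r : ℝ)|) :
    tk ∈ I ∧ tk ∉ J := by
  classical
  have hIne : I.Nonempty := ⟨hJne.choose, (Finset.mem_sdiff.1 hJne.choose_spec).1⟩
  have hbmpos : 0 < betaMin β I := betaMin_pos I hIne hsupp
  have hbm := hbmpos
  have he0 : 0 ≤ erc X I := erc_nonneg X I
  have he1 : 0 < 1 - erc X I := by linarith
  have hε0 : 0 ≤ ε₂ := le_trans (norm_nonneg _) hw
  -- decomposition
  set s := resid X J (mulVecE X β) with hs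
  set w' := resid X J w with hw'def
  have hrsw : r = s + w' := by rw [hr, resid_add]
  have hw'le : ‖w'‖ ≤ ε₂ := le_trans (norm_resid_le X J w) hw
  obtain ⟨u, huA, hu⟩ := resid_decomp X I hJI hsupp
  rw [← hs] at hu
  -- orthogonality of s to colSpan J
  have hsorth : ∀ a ∈ J, (inner ℝ (col X a) s : ℝ) = 0 := fun a ha =>
    inner_resid_zero X J (mulVecE X β)
      (Submodule.subset_span ⟨a, by simpa using ha, rfl⟩)
  -- maximizer over I
  obtain ⟨am, hamI, hammax⟩ := I.exists_max_image (fun a => |(inner ℝ (col X a) s : ℝ)|) hIne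
  set M := |(inner ℝ (col X am) s : ℝ)| with hM
  have hM0 : 0 ≤ M := abs_nonneg _
  -- lower bound on M
  have hlow : l * betaMin β I ≤ M := by
    have key1 : l * ∑ a ∈ I, u a ^ 2 ≤ ‖s‖ ^ 2 := by
      rw [hu]; exact norm_sq_sum_ge X I hl hLe u
    have key2 : ∑ a ∈ I \ J, β a ^ 2 ≤ ∑ a ∈ I, u a ^ 2 := by
      rw [show ∑ a ∈ I \ J, β a ^ 2 = ∑ a ∈ I \ J, u a ^ 2 from
        Finset.sum_congr rfl fun a ha => by
          rw [huA a (Finset.mem_sdiff.1 ha).1 (Finset.mem_sdiff.1 ha).2]]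
      exact Finset.sum_le_sum_of_subset_of_nonneg (Finset.sdiff_subset)
        (fun a _ _ => sq_nonneg _)
    have key3 : betaMin β I * ∑ a ∈ I \ J, |β a| ≤ ∑ a ∈ I \ J, β a ^ 2 := by
      rw [Finset.mul_sum]
      refine Finset.sum_le_sum fun a ha => ?_
      have := betaMin_le I (Finset.mem_sdiff.1 ha).1 (β := β)
      nlinarith [abs_nonneg (β a), sq_abs (β a)]
    have key4 : ‖s‖ ^ 2 = ∑ a ∈ I \ J, β a * (inner ℝ (col X a) s : ℝ) := by
      rw [← real_inner_self_eq_norm_sq]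
      nth_rw 1 [hu]
      rw [sum_inner]
      simp only [real_inner_smul_left]
      rw [← Finset.sum_sdiff hJI (f := fun a => u a * (inner ℝ (col X a) s : ℝ))]
      have hz : ∑ a ∈ J, u a * (inner ℝ (col X a) s : ℝ) = 0 :=
        Finset.sum_eq_zero fun a ha => by rw [hsorth a ha, mul_zero]
      rw [hz, add_zero]
      exact Finset.sum_congr rfl fun a ha =>
        by rw [huA a (Finset.mem_sdiff.1 ha).1 (Finset.mem_sdiff.1 ha).2]
    have key5 : ∑ a ∈ I \ J, β a * (inner ℝ (col X a) s : ℝ)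
        ≤ (∑ a ∈ I \ J, |β a|) * M := by
      rw [Finset.sum_mul]
      refine le_trans (Finset.sum_le_sum (fun a _ => le_abs_self _)) ?_
      refine Finset.sum_le_sum fun a ha => ?_
      rw [abs_mul]
      exact mul_le_mul_of_nonneg_left (hammax a (Finset.mem_sdiff.1 ha).1) (abs_nonneg _)
    have hSab : 0 < ∑ a ∈ I \ J, |β a| := by
      obtain ⟨a0, ha0⟩ := hJne
      have h1 : betaMin β I ≤ |β a0| := betaMin_le I (Finset.mem_sdiff.1 ha0).1
      have h2 : |β a0| ≤ ∑ a ∈ I \ J, |β a| :=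
        Finset.single_le_sum (fun a _ => abs_nonneg (β a)) ha0
      linarith
    have hchain : l * betaMin β I * (∑ a ∈ I \ J, |β a|) ≤ M * (∑ a ∈ I \ J, |β a|) := by
      have h1 : l * (betaMin β I * ∑ a ∈ I \ J, |β a|) ≤ l * ∑ a ∈ I \ J, β a ^ 2 :=
        mul_le_mul_of_nonneg_left key3 hlpos.le
      have h2 : l * ∑ a ∈ I \ J, β a ^ 2 ≤ l * ∑ a ∈ I, u a ^ 2 :=
        mul_le_mul_of_nonneg_left key2 hlpos.le
      nlinarith [key1, key4, key5]
    exact le_of_mul_le_mul_right hchain hSab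
  -- numeric threshold
  have hnum : ε₂ + ε₂ < M * (1 - erc X I) := by
    have h1 : betaMin β I * l * (1 - erc X I) ≤ M * (1 - erc X I) := by
      have : betaMin β I * l ≤ M := by nlinarith
      exact mul_le_mul_of_nonneg_right this he1.le
    linarith
  -- bound for selected index
  have htk_ge : M - ε₂ ≤ |(inner ℝ (col X tk) r : ℝ)| := by
    refine le_trans ?_ (htk am)
    have hsplit : (inner ℝ (col X am) r : ℝ)
        = (inner ℝ (col X am) s : ℝ) + (inner ℝ (col X am) w' : ℝ) := by
      rw [hrsw, inner_add_right]
    have hwsmall : |(inner ℝ (col X am) w' : ℝ)| ≤ ε₂ := by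
      refine le_trans (abs_real_inner_le_norm _ _) ?_
      rw [hcols am, one_mul]; exact hw'le
    calc M - ε₂ ≤ |(inner ℝ (col X am) s : ℝ)| - |(inner ℝ (col X am) w' : ℝ)| := by
          rw [← hM]; linarith
      _ ≤ |(inner ℝ (col X am) r : ℝ)| := by
          rw [hsplit]
          have := abs_add_le ((inner ℝ (col X am) s : ℝ) + (inner ℝ (col X am) w' : ℝ))
            (-(inner ℝ (col X am) w' : ℝ))
          simp only [add_neg_cancel_right] at this
          rw [abs_neg] at this
          linarith
  have hMε : ε₂ < M - ε₂ := by nlinarith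
  constructor
  · -- tk ∈ I
    by_contra htkI
    have hGub : ∀ b : ↥I, |(gram X I).mulVec (restr I u) b| ≤ M := by
      rintro ⟨b, hb⟩
      rw [mulVec_restr_eq_inner X I u hb, ← hu]
      exact hammax b hb
    have hss : |(inner ℝ (col X tk) s : ℝ)| ≤ erc X I * M := by
      rw [hu]
      exact inner_notin_le X I hl hLe hlpos htkI u hM0 hGub
    have hwt : |(inner ℝ (col X tk) w' : ℝ)| ≤ ε₂ := by
      refine le_trans (abs_real_inner_le_norm _ _) ?_
      rw [hcols tk, one_mul]; exact hw'le
    have hub : |(inner ℝ (col X tk) r : ℝ)| ≤ erc X I * M + ε₂ := by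
      rw [hrsw, inner_add_right]
      exact le_trans (abs_add_le _ _) (add_le_add hss hwt)
    nlinarith
  · -- tk ∉ J
    intro htkJ
    have : (inner ℝ (col X tk) r : ℝ) = 0 := by
      rw [hr]
      exact inner_resid_zero X J _ (Submodule.subset_span ⟨tk, by simpa using htkJ, rfl⟩)
    rw [this, abs_zero] at htk_ge
    linarith

end TFAux

namespace TFAux

open TFOMP Finset

variable {n p : ℕ}

lemma omp_supp_sub (X : Matrix (Fin n) (Fin p) ℝ) (β : Fin p → ℝ)
    (w : EuclideanSpace ℝ (Fin n)) (I : Finset (Fin p)) (ε₂ l L : ℝ)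
    (hcols : ∀ j, ‖col X j‖ = 1)
    (hsupp : ∀ k, k ∈ I ↔ β k ≠ 0)
    (hw : ‖w‖ ≤ ε₂)
    (hl : IsSmallestEig (gram X I) l) (hLe : IsLargestEig (gram X I) L)
    (hlpos : 0 < l) (herc : erc X I < 1)
    (hea : ε₂ < betaMin β I * l * (1 - erc X I) / 2)
    (t : ℕ → Fin p) (hOMP : IsOMP X (mulVecE X β + w) t) :
    ∀ k, k ≤ I.card → ompSupp t k ⊆ I ∧ (ompSupp t k).card = k := by
  intro k
  induction k with
  | zero => intro _; exact ⟨by simp [ompSupp], by simp [ompSupp]⟩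
  | succ k ih =>
    intro hk1
    obtain ⟨hsub, hcard⟩ := ih (Nat.le_of_succ_le hk1)
    have hne : (I \ ompSupp t k).Nonempty := by
      rw [Finset.sdiff_nonempty]
      intro hIs
      have := Finset.card_le_card hIs
      omega
    have hmax := (hOMP k).1
    have htk : t k ∈ I ∧ t k ∉ ompSupp t k :=
      omp_step X β w I ε₂ l L hcols hsupp hw hl hLe hlpos herc hea hsub hne rfl hmax
    have hsucc : ompSupp t (k + 1) = insert (t k) (ompSupp t k) := by
      rw [ompSupp, Finset.range_add_one, Finset.image_insert]; rfl
    constructor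
    · rw [hsucc]; exact Finset.insert_subset htk.1 hsub
    · rw [hsucc, Finset.card_insert_of_notMem htk.2, hcard]

lemma resid_sq_lower (X : Matrix (Fin n) (Fin p) ℝ) (β : Fin p → ℝ)
    (I : Finset (Fin p)) {l L : ℝ}
    (hsupp : ∀ k, k ∈ I ↔ β k ≠ 0)
    (hl : IsSmallestEig (gram X I) l) (hLe : IsLargestEig (gram X I) L)
    (hlnn : 0 ≤ l) {J : Finset (Fin p)} (hJI : J ⊆ I) :
    l * ∑ a ∈ I \ J, β a ^ 2 ≤ ‖resid X J (mulVecE X β)‖ ^ 2 := by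
  obtain ⟨u, huA, hu⟩ := resid_decomp X I hJI hsupp
  have key1 : l * ∑ a ∈ I, u a ^ 2 ≤ ‖resid X J (mulVecE X β)‖ ^ 2 := by
    rw [hu]; exact norm_sq_sum_ge X I hl hLe u
  have key2 : ∑ a ∈ I \ J, β a ^ 2 ≤ ∑ a ∈ I, u a ^ 2 := by
    rw [show ∑ a ∈ I \ J, β a ^ 2 = ∑ a ∈ I \ J, u a ^ 2 from
      Finset.sum_congr rfl fun a ha => by
        rw [huA a (Finset.mem_sdiff.1 ha).1 (Finset.mem_sdiff.1 ha).2]]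
    exact Finset.sum_le_sum_of_subset_of_nonneg (Finset.sdiff_subset)
      (fun a _ _ => sq_nonneg _)
  calc l * ∑ a ∈ I \ J, β a ^ 2 ≤ l * ∑ a ∈ I, u a ^ 2 :=
        mul_le_mul_of_nonneg_left key2 hlnn
    _ ≤ _ := key1

lemma resid_lower (X : Matrix (Fin n) (Fin p) ℝ) (β : Fin p → ℝ)
    (w : EuclideanSpace ℝ (Fin n)) (I : Finset (Fin p)) {ε₂ l L : ℝ}
    (hsupp : ∀ k, k ∈ I ↔ β k ≠ 0) (hw : ‖w‖ ≤ ε₂)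
    (hl : IsSmallestEig (gram X I) l) (hLe : IsLargestEig (gram X I) L)
    (hlnn : 0 ≤ l) {J : Finset (Fin p)} (hJI : J ⊆ I) :
    Real.sqrt l * Real.sqrt (∑ a ∈ I \ J, β a ^ 2) - ε₂
      ≤ ‖resid X J (mulVecE X β + w)‖ := by
  have hsq := resid_sq_lower X β I hsupp hl hLe hlnn hJI
  have hs_ge : Real.sqrt l * Real.sqrt (∑ a ∈ I \ J, β a ^ 2)
      ≤ ‖resid X J (mulVecE X β)‖ := by
    rw [← Real.sqrt_mul hlnn]
    have h2 := Real.sqrt_le_sqrt hsq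
    rwa [Real.sqrt_sq (norm_nonneg _)] at h2
  have hradd : resid X J (mulVecE X β + w)
      = resid X J (mulVecE X β) + resid X J w := resid_add X J _ _
  have hw2 : ‖resid X J w‖ ≤ ε₂ := le_trans (norm_resid_le X J w) hw
  have htri : ‖resid X J (mulVecE X β)‖
      ≤ ‖resid X J (mulVecE X β + w)‖ + ‖resid X J w‖ := by
    have : resid X J (mulVecE X β)
        = resid X J (mulVecE X β + w) - resid X J w := by rw [hradd]; abel
    rw [this]
    exact norm_sub_le _ _
  linarith

lemma resid_upper (X : Matrix (Fin n) (Fin p) ℝ) (β : Fin p → ℝ)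
    (w : EuclideanSpace ℝ (Fin n)) (I : Finset (Fin p)) {ε₂ l L : ℝ}
    (hsupp : ∀ k, k ∈ I ↔ β k ≠ 0) (hw : ‖w‖ ≤ ε₂)
    (hl : IsSmallestEig (gram X I) l) (hLe : IsLargestEig (gram X I) L)
    (hLnn : 0 ≤ L) {J : Finset (Fin p)} (hJI : J ⊆ I) :
    ‖resid X J (mulVecE X β + w)‖
      ≤ Real.sqrt L * Real.sqrt (∑ a ∈ I \ J, β a ^ 2) + ε₂ := by
  classical
  have hradd : resid X J (mulVecE X β + w)
      = resid X J (mulVecE X β) + resid X J w := resid_add X J _ _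
  have hw2 : ‖resid X J w‖ ≤ ε₂ := le_trans (norm_resid_le X J w) hw
  set b : Fin p → ℝ := fun a => if a ∈ I \ J then β a else 0 with hb
  have hsum_eq : (∑ a ∈ I \ J, β a • col X a) = ∑ a ∈ I, b a • col X a := by
    rw [← Finset.sum_subset (Finset.sdiff_subset : I \ J ⊆ I) (fun x _ hx => by
      rw [hb]; simp only; rw [if_neg hx, zero_smul])]
    exact Finset.sum_congr rfl fun a ha => by rw [hb]; simp only; rw [if_pos ha]
  have hsub_eq : mulVecE X β - (∑ a ∈ J, β a • col X a) = ∑ a ∈ I \ J, β a • col X a := by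
    rw [mulVecE_eq_sum X I hsupp, ← Finset.sum_sdiff hJI (f := fun a => β a • col X a)]
    abel
  have hz : (∑ a ∈ J, β a • col X a) ∈ colSpan X J := sum_smul_col_mem X J β
  have hnorm_s : ‖resid X J (mulVecE X β)‖ ≤ ‖∑ a ∈ I \ J, β a • col X a‖ := by
    rw [← hsub_eq]
    exact norm_resid_le_sub X J _ hz
  have hb2 : ∑ a ∈ I, b a ^ 2 = ∑ a ∈ I \ J, β a ^ 2 := by
    rw [← Finset.sum_subset (Finset.sdiff_subset : I \ J ⊆ I) (fun x _ hx => by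
      rw [hb]; simp only; rw [if_neg hx]; ring)]
    exact Finset.sum_congr rfl fun a ha => by rw [hb]; simp only; rw [if_pos ha]
  have hquad : ‖∑ a ∈ I \ J, β a • col X a‖ ^ 2 ≤ L * ∑ a ∈ I \ J, β a ^ 2 := by
    rw [hsum_eq, ← hb2]
    exact norm_sq_sum_le X I hl hLe b
  have hnn : (0:ℝ) ≤ ∑ a ∈ I \ J, β a ^ 2 := Finset.sum_nonneg fun a _ => sq_nonneg _
  have hsqrt : ‖∑ a ∈ I \ J, β a • col X a‖
      ≤ Real.sqrt L * Real.sqrt (∑ a ∈ I \ J, β a ^ 2) := by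
    rw [← Real.sqrt_mul hLnn]
    have h2 := Real.sqrt_le_sqrt hquad
    rwa [Real.sqrt_sq (norm_nonneg _)] at h2
  calc ‖resid X J (mulVecE X β + w)‖
      ≤ ‖resid X J (mulVecE X β)‖ + ‖resid X J w‖ := by rw [hradd]; exact norm_add_le _ _
    _ ≤ Real.sqrt L * Real.sqrt (∑ a ∈ I \ J, β a ^ 2) + ε₂ :=
        add_le_add (le_trans hnorm_s hsqrt) hw2

lemma resid_full (X : Matrix (Fin n) (Fin p) ℝ) (β : Fin p → ℝ)
    (w : EuclideanSpace ℝ (Fin n)) (I : Finset (Fin p)) {ε₂ : ℝ}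
    (hsupp : ∀ k, k ∈ I ↔ β k ≠ 0) (hw : ‖w‖ ≤ ε₂) :
    ‖resid X I (mulVecE X β + w)‖ ≤ ε₂ := by
  have hradd : resid X I (mulVecE X β + w)
      = resid X I (mulVecE X β) + resid X I w := resid_add X I _ _
  have hzero : resid X I (mulVecE X β) = 0 := by
    refine resid_eq_zero_of_mem X I ?_
    rw [mulVecE_eq_sum X I hsupp]
    exact sum_smul_col_mem X I β
  rw [hradd, hzero, zero_add]
  exact le_trans (norm_resid_le X I w) hw

end TFAux

namespace TFAux

set_option maxHeartbeats 1000000 in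
lemma final_arith {l L bm bM c ε r0 rk rk1 rko : ℝ}
    (hl0 : 0 < l) (hl1 : l ≤ 1) (hL1 : 1 ≤ L)
    (hbm : 0 < bm) (hbM : bm ≤ bM) (hcbm : bm ≤ c)
    (hε0 : 0 ≤ ε)
    (heb : ε * (1 + 2 * (L / l) + (L / l) * (bM / bm)) < l * bm)
    (hrko : rko ≤ ε)
    (hr0 : Real.sqrt l * bm - ε ≤ r0)
    (hrk : Real.sqrt l * c - ε ≤ rk)
    (hrk1 : rk1 ≤ Real.sqrt L * (c + bM) + ε)
    (hrk1ge : Real.sqrt l * bm - ε ≤ rk1) (hrko0 : 0 ≤ rko) :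
    rko / r0 < rk / rk1 := by
  set sl := Real.sqrt l with hsl
  set sL := Real.sqrt L with hsLdef
  have hsl0 : 0 ≤ sl := Real.sqrt_nonneg l
  have hsl2 : sl ^ 2 = l := Real.sq_sqrt hl0.le
  have hsl_le1 : sl ≤ 1 := by
    rw [hsl]; exact Real.sqrt_le_one.2 hl1
  have hl_le_sl : l ≤ sl := by nlinarith
  have hsL0 : 0 ≤ sL := Real.sqrt_nonneg L
  have hsL2 : sL ^ 2 = L := Real.sq_sqrt (by linarith)
  have hsL1 : 1 ≤ sL := by nlinarith
  have hsL_leL : sL ≤ L := by nlinarith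
  have hq1 : 1 ≤ L / l := (one_le_div hl0).2 (le_trans hl1 hL1)
  have hLl : L ≤ L / l := by
    rw [le_div_iff₀ hl0]; nlinarith
  have hc0 : 0 < c := lt_of_lt_of_le hbm hcbm
  have hbM0 : 0 < bM := lt_of_lt_of_le hbm hbM
  -- ε < l * bm
  have hdd : (0:ℝ) ≤ (L / l) * (bM / bm) :=
    mul_nonneg (div_nonneg (by linarith) hl0.le) (div_nonneg (by linarith) hbm.le)
  have hone : (1:ℝ) ≤ 1 + 2 * (L / l) + (L / l) * (bM / bm) := by nlinarith
  have hεlbm : ε < l * bm := by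
    have h := mul_le_mul_of_nonneg_left hone hε0
    linarith
  have hd1pos : 0 < sl * bm - ε := by nlinarith
  have hd2pos : 0 < sL * (c + bM) + ε := by nlinarith
  have hrk1pos : 0 < rk1 := lt_of_lt_of_le hd1pos hrk1ge
  -- cover inequality
  have hcover : sL * (c + bM) + sl * (c + bm) ≤ (1 + 2 * (L / l) + (L / l) * (bM / bm)) * c := by
    have A1 : sl * (c + bm) ≤ 2 * c := by nlinarith
    have A2 : 2 * c ≤ c + (L / l) * c := by nlinarith
    have A3 : sL * c ≤ (L / l) * c := by nlinarith
    have A4 : sL * bM ≤ (L / l) * (bM / bm) * c := by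
      have h1 : bM ≤ (bM / bm) * c := by
        rw [div_mul_eq_mul_div, le_div_iff₀ hbm]; nlinarith
      have h2 : sL * bM ≤ sL * ((bM / bm) * c) :=
        mul_le_mul_of_nonneg_left h1 hsL0
      have h3 : sL * ((bM / bm) * c) ≤ (L / l) * ((bM / bm) * c) := by
        have hx : (0:ℝ) ≤ (bM / bm) * c :=
          mul_nonneg (div_nonneg hbM0.le hbm.le) hc0.le
        exact mul_le_mul_of_nonneg_right (le_trans hsL_leL hLl) hx
      calc sL * bM ≤ sL * ((bM / bm) * c) := h2
        _ ≤ (L / l) * ((bM / bm) * c) := h3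
        _ = (L / l) * (bM / bm) * c := by ring
    nlinarith
  -- key product inequality
  have hkey : ε * (sL * (c + bM) + sl * (c + bm)) < l * bm * c := by
    have h1 : ε * (sL * (c + bM) + sl * (c + bm))
        ≤ ε * ((1 + 2 * (L / l) + (L / l) * (bM / bm)) * c) :=
      mul_le_mul_of_nonneg_left hcover hε0
    have h2 : ε * ((1 + 2 * (L / l) + (L / l) * (bM / bm)) * c)
        < (l * bm) * c := by
      rw [← mul_assoc]
      exact mul_lt_mul_of_pos_right heb hc0
    nlinarith
  -- cross-multiplied target
  have htarget : ε * (sL * (c + bM) + ε) < (sl * c - ε) * (sl * bm - ε) := by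
    have hslsl : sl * sl = l := by rw [← hsl2]; ring
    have hexp : (sl * c - ε) * (sl * bm - ε)
        = sl * sl * (bm * c) - ε * (sl * (c + bm)) + ε * ε := by ring
    rw [hslsl] at hexp
    have hlhs : ε * (sL * (c + bM) + ε) = ε * (sL * (c + bM)) + ε * ε := by ring
    have hsplit : ε * (sL * (c + bM) + sl * (c + bm))
        = ε * (sL * (c + bM)) + ε * (sl * (c + bm)) := by ring
    rw [hexp, hlhs]
    rw [hsplit] at hkey
    linarith
  have hnum_pos : 0 < sl * c - ε := by nlinarith
  have h1 : rko / r0 ≤ ε / (sl * bm - ε) :=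
    div_le_div₀ hε0 hrko hd1pos hr0
  have h2 : ε / (sl * bm - ε) < (sl * c - ε) / (sL * (c + bM) + ε) := by
    rw [div_lt_div_iff₀ hd1pos hd2pos]
    linarith [htarget]
  have h3 : (sl * c - ε) / (sL * (c + bM) + ε) ≤ rk / rk1 :=
    div_le_div₀ (by nlinarith : (0:ℝ) ≤ rk) hrk hrk1pos hrk1
  linarith

end TFAux

/-- in the model `y = Xβ + w`, `‖w‖₂ ≤ ε₂`, assume `X_I` has full
column rank (`λ_min > 0`), `erc(X,I) < 1`, and `0 ≤ ε₂ < min(ε^a, ε^b)` where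
`ε^a = β_min λ_min(1 − erc(X,I))/2` and
`ε^b = λ_min β_min/(1 + 2λ_max/λ_min + (λ_max/λ_min)(β_max/β_min))`. Then the
first `k₀` indices selected by OMP run on `y` are exactly the elements of `I`,
and `t(k) > t(k₀)` for every `1 ≤ k ≤ k₀ − 1`. -/
theorem statement14 {n p : ℕ} (X : Matrix (Fin n) (Fin p) ℝ) (β : Fin p → ℝ)
    (w : EuclideanSpace ℝ (Fin n)) (I : Finset (Fin p)) (k₀ : ℕ)
    (ε₂ lammin lammax : ℝ)
    (hcols : ∀ j, ‖col X j‖ = 1)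
    (hsupp : ∀ k, k ∈ I ↔ β k ≠ 0)
    (hcard : I.card = k₀) (hk₀ : 1 ≤ k₀)
    (hw : ‖w‖ ≤ ε₂)
    (hrank : FullColRank X I)
    (hlammin : IsSmallestEig (gram X I) lammin)
    (hlammax : IsLargestEig (gram X I) lammax)
    (hlampos : 0 < lammin)
    (herc : erc X I < 1)
    (hε0 : 0 ≤ ε₂)
    (hε : ε₂ < min (betaMin β I * lammin * (1 - erc X I) / 2)
        (lammin * betaMin β I /
          (1 + 2 * (lammax / lammin) + (lammax / lammin) * (betaMax β I / betaMin β I)))) :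
    ∀ t : ℕ → Fin p, IsOMP X (mulVecE X β + w) t →
      ompSupp t k₀ = I ∧
        ∀ k : ℕ, 1 ≤ k → k ≤ k₀ - 1 →
          ratio X (mulVecE X β + w) t k₀ < ratio X (mulVecE X β + w) t k := by
  intro t hOMP
  classical
  have hIne : I.Nonempty := Finset.card_pos.1 (by omega)
  obtain ⟨a0, ha0⟩ := hIne
  have hbm : 0 < betaMin β I := TFAux.betaMin_pos I ⟨a0, ha0⟩ hsupp
  have hbMle : betaMin β I ≤ betaMax β I := TFAux.betaMin_le_betaMax I (β := β) ⟨a0, ha0⟩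
  have h1L := TFAux.eig_le_one_le X I hlammin hlammax hcols ha0
  have hea : ε₂ < betaMin β I * lammin * (1 - erc X I) / 2 :=
    lt_of_lt_of_le hε (min_le_left _ _)
  have heb : ε₂ < lammin * betaMin β I /
      (1 + 2 * (lammax / lammin) + (lammax / lammin) * (betaMax β I / betaMin β I)) :=
    lt_of_lt_of_le hε (min_le_right _ _)
  have hsub := TFAux.omp_supp_sub X β w I ε₂ lammin lammax hcols hsupp hw
    hlammin hlammax hlampos herc hea t hOMP
  have hJm : ∀ m, m ≤ k₀ → ompSupp t m ⊆ I ∧ (ompSupp t m).card = m :=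
    fun m hm => hsub m (by omega)
  have hsuppI : ompSupp t k₀ = I := by
    obtain ⟨h1, h2⟩ := hJm k₀ le_rfl
    exact Finset.eq_of_subset_of_card_le h1 (by omega)
  refine ⟨hsuppI, ?_⟩
  intro k hk1 hkk0
  have hkk : k < k₀ := by omega
  set y := mulVecE X β + w with hy
  set cm : ℕ → ℝ := fun m => Real.sqrt (∑ a ∈ I \ ompSupp t m, β a ^ 2) with hcm
  have hLnn : (0:ℝ) ≤ lammax := by linarith [h1L.2]
  have hlow : ∀ m, m ≤ k₀ →
      Real.sqrt lammin * cm m - ε₂ ≤ ‖ompResid X y t m‖ := fun m hm =>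
    TFAux.resid_lower X β w I hsupp hw hlammin hlammax hlampos.le (hJm m hm).1
  have hup : ∀ m, m ≤ k₀ →
      ‖ompResid X y t m‖ ≤ Real.sqrt lammax * cm m + ε₂ := fun m hm =>
    TFAux.resid_upper X β w I hsupp hw hlammin hlammax hLnn (hJm m hm).1
  have hcm_ge : ∀ m, m < k₀ → betaMin β I ≤ cm m := by
    intro m hm
    have hne : (I \ ompSupp t m).Nonempty := by
      rw [Finset.sdiff_nonempty]
      intro hIs
      have := Finset.card_le_card hIs
      have := (hJm m hm.le).2
      omega
    obtain ⟨a, ha⟩ := hne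
    have h1 : betaMin β I ≤ |β a| := TFAux.betaMin_le I (Finset.mem_sdiff.1 ha).1
    have h2 : betaMin β I ^ 2 ≤ β a ^ 2 := by nlinarith [abs_nonneg (β a), sq_abs (β a)]
    have h3 : β a ^ 2 ≤ ∑ b ∈ I \ ompSupp t m, β b ^ 2 :=
      Finset.single_le_sum (fun b _ => sq_nonneg (β b)) ha
    have h4 := Real.sqrt_le_sqrt (le_trans h2 h3)
    rwa [Real.sqrt_sq hbm.le] at h4
  -- F5
  have hinsert : ompSupp t k = insert (t (k - 1)) (ompSupp t (k - 1)) := by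
    have hk : k = (k - 1) + 1 := by omega
    rw [hk, ompSupp, Finset.range_add_one, Finset.image_insert]
    rfl
  have htkm1_mem : t (k - 1) ∈ ompSupp t k := by
    rw [hinsert]; exact Finset.mem_insert_self _ _
  have htkm1I : t (k - 1) ∈ I := (hJm k hkk.le).1 htkm1_mem
  have hbMpos : 0 < betaMax β I := lt_of_lt_of_le hbm hbMle
  have hc5 : cm (k - 1) ≤ cm k + betaMax β I := by
    have hsubs : I \ ompSupp t (k - 1) ⊆ insert (t (k - 1)) (I \ ompSupp t k) := by
      intro a ha
      obtain ⟨haI, haJ⟩ := Finset.mem_sdiff.1 ha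
      by_cases hat : a = t (k - 1)
      · exact Finset.mem_insert.2 (Or.inl hat)
      · refine Finset.mem_insert.2 (Or.inr (Finset.mem_sdiff.2 ⟨haI, ?_⟩))
        rw [hinsert]
        intro hmem
        rcases Finset.mem_insert.1 hmem with h | h
        · exact hat h
        · exact haJ h
    have htnot : t (k - 1) ∉ I \ ompSupp t k := by
      intro hmem
      exact (Finset.mem_sdiff.1 hmem).2 htkm1_mem
    have hs1 : ∑ a ∈ I \ ompSupp t (k - 1), β a ^ 2
        ≤ ∑ a ∈ insert (t (k - 1)) (I \ ompSupp t k), β a ^ 2 :=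
      Finset.sum_le_sum_of_subset_of_nonneg hsubs (fun a _ _ => sq_nonneg _)
    rw [Finset.sum_insert htnot] at hs1
    have hbMt : β (t (k - 1)) ^ 2 ≤ betaMax β I ^ 2 := by
      have := TFAux.le_betaMax I htkm1I (β := β)
      nlinarith [abs_nonneg (β (t (k - 1))), sq_abs (β (t (k - 1)))]
    have hcmk2 : cm k ^ 2 = ∑ a ∈ I \ ompSupp t k, β a ^ 2 :=
      Real.sq_sqrt (Finset.sum_nonneg fun a _ => sq_nonneg _)
    have hcmk0 : 0 ≤ cm k := Real.sqrt_nonneg _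
    have hbound : ∑ a ∈ I \ ompSupp t (k - 1), β a ^ 2 ≤ (cm k + betaMax β I) ^ 2 := by
      nlinarith
    have h4 := Real.sqrt_le_sqrt hbound
    rwa [Real.sqrt_sq (by positivity)] at h4
  -- numeric inputs
  have hden : (0:ℝ) < 1 + 2 * (lammax / lammin)
      + (lammax / lammin) * (betaMax β I / betaMin β I) := by
    have h1 : 0 < lammax / lammin := div_pos (by linarith [h1L.2]) hlampos
    have h2 : 0 < betaMax β I / betaMin β I := div_pos hbMpos hbm
    positivity
  have heb' : ε₂ * (1 + 2 * (lammax / lammin)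
      + (lammax / lammin) * (betaMax β I / betaMin β I)) < lammin * betaMin β I :=
    (lt_div_iff₀ hden).1 heb
  -- residual bounds
  have hrko : ‖ompResid X y t k₀‖ ≤ ε₂ := by
    show ‖resid X (ompSupp t k₀) y‖ ≤ ε₂
    rw [hsuppI]
    exact TFAux.resid_full X β w I hsupp hw
  have hr0 : Real.sqrt lammin * betaMin β I - ε₂ ≤ ‖ompResid X y t (k₀ - 1)‖ := by
    have h1 := hlow (k₀ - 1) (by omega)
    have h2 := hcm_ge (k₀ - 1) (by omega)
    have h3 : Real.sqrt lammin * betaMin β I ≤ Real.sqrt lammin * cm (k₀ - 1) :=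
      mul_le_mul_of_nonneg_left h2 (Real.sqrt_nonneg _)
    linarith
  have hrk : Real.sqrt lammin * cm k - ε₂ ≤ ‖ompResid X y t k‖ := hlow k hkk.le
  have hrk1 : ‖ompResid X y t (k - 1)‖
      ≤ Real.sqrt lammax * (cm k + betaMax β I) + ε₂ := by
    have h1 := hup (k - 1) (by omega)
    have h3 : Real.sqrt lammax * cm (k - 1)
        ≤ Real.sqrt lammax * (cm k + betaMax β I) :=
      mul_le_mul_of_nonneg_left hc5 (Real.sqrt_nonneg _)
    linarith
  have hrk1ge : Real.sqrt lammin * betaMin β I - ε₂ ≤ ‖ompResid X y t (k - 1)‖ := by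
    have h1 := hlow (k - 1) (by omega)
    have h2 := hcm_ge (k - 1) (by omega)
    have h3 : Real.sqrt lammin * betaMin β I ≤ Real.sqrt lammin * cm (k - 1) :=
      mul_le_mul_of_nonneg_left h2 (Real.sqrt_nonneg _)
    linarith
  exact TFAux.final_arith hlampos h1L.1 h1L.2 hbm hbMle (hcm_ge k hkk) hε0 heb'
    hrko hr0 hrk hrk1 hrk1ge (norm_nonneg _)
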